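/- (Corollary 2, realization of prescribed consistent distances) Let x ∈ ℤ × ℤ be a unimodular pair and let dₐ, d_b be integers with dₐ ≥ 2 and d_b ≥ 2. Then there exists a unimodular pair y ∈ ℤ × ℤ with |det(x,y)| ≥ 2 such that the two minimal lengths d₊(x,y) and d₋(x,y) of consistent paths of signs +1 and −1 from x to y satisfy {d₊(x,y), d₋(x,y)} = {dₐ, d_b}. In particular the union of the two shortest consistent paths is a cycle through x of length dₐ + d_b. -/

import Mathlib

/-- The determinant of two integer vectors in the plane. -/
def det (x y : ℤ × ℤ) : ℤ := x.1 * y.2 - x.2 * y.1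

/-- A path of length `n` from `x` to `y` in the distant graph of `P(ℤ)`, given by its
sequence of vertices `z 0 = x, …, z n = y`: all vertices are unimodular pairs,
consecutive vertices are distant (`|det| = 1`), and distinct indices give distinct
projective points (`z i ≠ ± z j`). -/
def IsPath (x y : ℤ × ℤ) (n : ℕ) (z : ℕ → ℤ × ℤ) : Prop :=
  z 0 = x ∧ z n = y ∧
  (∀ i, i ≤ n → Int.gcd (z i).1 (z i).2 = 1) ∧
  (∀ i, i < n → |det (z i) (z (i + 1))| = 1) ∧
  (∀ i j, i ≤ n → j ≤ n → i ≠ j → z i ≠ z j ∧ z i ≠ -z j)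

/-- A consistent path of sign `ε` from `x` to `y`: a path all of whose intermediate
vertices `z i = α • x + β • y` (coefficients over `ℚ`) satisfy `ε * α * β > 0`, i.e. they
all lie in the same pair of opposite open cones determined by `x` and `y`. -/
def IsConsistentPath (x y : ℤ × ℤ) (ε : ℚ) (n : ℕ) (z : ℕ → ℤ × ℤ) : Prop :=
  IsPath x y n z ∧
  ∀ i, 0 < i → i < n → ∃ α β : ℚ,
    ((z i).1 : ℚ) = α * x.1 + β * y.1 ∧ ((z i).2 : ℚ) = α * x.2 + β * y.2 ∧
    ε * (α * β) > 0

lemma fan_core (m : ℕ) (w : ℕ → ℤ × ℤ) (P Q : ℤ) (hP : 1 ≤ P) (hQ : 1 ≤ Q)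
    (h0 : w 0 = (1, 0)) (hm : w m = (P, Q) ∨ w m = (-P, -Q))
    (hdet : ∀ i, i < m → |det (w i) (w (i + 1))| = 1)
    (hcone : ∀ i, 0 < i → i < m → 0 < (w i).2 * ((w i).1 * Q - (w i).2 * P)) :
    Q ≤ (m : ℤ) * P := by
  set e : ℕ → ℤ := fun i => if (w i).2 < 0 then -1 else 1 with he
  set u : ℕ → ℤ := fun i => e i * (w i).1 with hu
  set v : ℕ → ℤ := fun i => e i * (w i).2 with hv
  have hu1 : ∀ i, i ≤ m → 1 ≤ u i := by
    intro i him
    rcases Nat.eq_zero_or_pos i with h | hipos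
    · subst h; simp [hu, he, h0]
    rcases eq_or_lt_of_le him with h | hilt
    · subst h
      rcases hm with h | h <;> simp [hu, he, h] <;> split_ifs <;> omega
    · have hc := hcone i hipos hilt
      simp only [hu, he]
      split_ifs with hs
      · have h3 : (w i).1 * Q < (w i).2 * P := by nlinarith
      
        have h4 : (w i).2 * P ≤ -1 * P := by
          have : (w i).2 ≤ -1 := by omega
          exact mul_le_mul_of_nonneg_right this (by linarith)
        have h5 : (w i).1 * Q < 0 := by linarith
        have h6 : (w i).1 < 0 := by
          by_contra hcon
          push_neg at hcon
          nlinarith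
        omega
      · push_neg at hs
        rcases lt_or_eq_of_le hs with hs2 | hs2
        · have h3 : (w i).2 * P < (w i).1 * Q := by nlinarith
          have h4 : 1 * 1 ≤ (w i).2 * P := by
            apply mul_le_mul <;> omega
          have h6 : 0 < (w i).1 := by
            by_contra hcon
            push_neg at hcon
            nlinarith
          omega
        · rw [← hs2] at hc; simp at hc
  have habse : ∀ i, |e i| = 1 := by
    intro i; simp only [he]; split_ifs <;> simp
  have hstep : ∀ i, i < m → |u i * v (i + 1) - v i * u (i + 1)| = 1 := by
    intro i hi
    have : u i * v (i + 1) - v i * u (i + 1) = (e i * e (i + 1)) * det (w i) (w (i + 1)) := by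
      simp only [hu, hv, det]; ring
    rw [this, abs_mul, abs_mul, habse, habse, hdet i hi]; ring
  have hinv : ∀ i, i ≤ m → v i ≤ (i : ℤ) * u i := by
    intro i
    induction i with
    | zero => intro _; simp [hv, he, h0]
    | succ n ih =>
      intro hnm
      have hn : n ≤ m := by omega
      have ihn := ih hn
      have h1 : 1 ≤ u n := hu1 n hn
      have h2 : 1 ≤ u (n + 1) := hu1 (n + 1) hnm
      have hd : u n * v (n + 1) - v n * u (n + 1) ≤ 1 := by
        have := hstep n (by omega)
        have := le_abs_self (u n * v (n + 1) - v n * u (n + 1))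
        omega
      have key : u n * v (n + 1) ≤ ((n : ℤ) + 1) * (u n * u (n + 1)) := by
        nlinarith [mul_le_mul_of_nonneg_right ihn (by linarith : (0:ℤ) ≤ u (n + 1))]
      have : v (n + 1) ≤ ((n : ℤ) + 1) * u (n + 1) := by
        have h3 : u n * v (n + 1) ≤ u n * (((n : ℤ) + 1) * u (n + 1)) := by
          calc u n * v (n + 1) ≤ ((n : ℤ) + 1) * (u n * u (n + 1)) := key
          _ = u n * (((n : ℤ) + 1) * u (n + 1)) := by ring
        exact le_of_mul_le_mul_left h3 (by linarith)
      push_cast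
      linarith
  have hend := hinv m (le_refl m)
  have hvm : v m = Q ∧ u m = P := by
    rcases hm with h | h <;>
      simp only [hv, hu, he, h, Prod.snd, Prod.fst] <;> split_ifs <;> constructor <;> omega
  rw [hvm.1, hvm.2] at hend
  exact hend


lemma gcd_one_of_comb {z1 z2 s t : ℤ} (h : s * z1 + t * z2 = 1) : Int.gcd z1 z2 = 1 :=
  Int.isCoprime_iff_gcd_eq_one.mp ⟨s, t, h⟩

set_option maxHeartbeats 2000000

/-- Corollary 2 (realization of prescribed consistent distances): for every unimodular
pair `x` and all integers `da, db ≥ 2` there is a unimodular pair `y`, non-adjacent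
to `x`, such that the minimal lengths of consistent paths of signs `+1` and `-1` from
`x` to `y` are exactly `da` and `db` (in some order); the union of the two shortest
consistent paths is then a cycle through `x` of length `da + db`. -/
theorem realize_consistent_distances (x : ℤ × ℤ) (hx : Int.gcd x.1 x.2 = 1)
    (da db : ℕ) (hda : 2 ≤ da) (hdb : 2 ≤ db) :
    ∃ y : ℤ × ℤ, Int.gcd y.1 y.2 = 1 ∧ 2 ≤ |det x y| ∧
      ∃ dp dm : ℕ,
        (∃ z, IsConsistentPath x y 1 dp z) ∧
        (∀ m z, IsConsistentPath x y 1 m z → dp ≤ m) ∧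
        (∃ z, IsConsistentPath x y (-1) dm z) ∧
        (∀ m z, IsConsistentPath x y (-1) m z → dm ≤ m) ∧
        ({dp, dm} : Set ℕ) = {da, db} := by
  obtain ⟨s, t, hst⟩ := Int.isCoprime_iff_gcd_eq_one.mpr hx
  set d : ℤ := s with d_def
  set c : ℤ := -t with c_def
  have hdc : x.1 * d - x.2 * c = 1 := by rw [d_def, c_def]; linear_combination hst
  set a : ℤ := (da : ℤ) - 1 with a_def
  set b : ℤ := (db : ℤ) - 1 with b_def
  have hda' : (2 : ℤ) ≤ (da : ℤ) := by exact_mod_cast hda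
  have hdb' : (2 : ℤ) ≤ (db : ℤ) := by exact_mod_cast hdb
  have ha : 1 ≤ a := by rw [a_def]; linarith
  have hb : 1 ≤ b := by rw [b_def]; linarith
  have hD : 2 ≤ a * b + 1 := by nlinarith
  set y : ℤ × ℤ := (b * x.1 + (a * b + 1) * c, b * x.2 + (a * b + 1) * d) with y_def
  have hy1 : y.1 = b * x.1 + (a * b + 1) * c := rfl
  have hy2 : y.2 = b * x.2 + (a * b + 1) * d := rfl
  have hdxy : det x y = a * b + 1 := by
    simp only [det, hy1, hy2]; linear_combination (a * b + 1) * hdc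
  set aN : ℕ := da - 1 with aN_def
  have haN : (aN : ℤ) = a := by rw [a_def, aN_def]; push_cast; omega
  have haN1 : aN + 1 = da := by omega
  -- the plus path
  set zp : ℕ → ℤ × ℤ :=
    fun i => if i ≤ aN then (x.1 + (i : ℤ) * c, x.2 + (i : ℤ) * d) else y with zp_def
  have hzp_le : ∀ i, i ≤ aN → zp i = (x.1 + (i : ℤ) * c, x.2 + (i : ℤ) * d) := by
    intro i hi; simp only [zp_def, if_pos hi]
  have hzp_top : ∀ i, aN < i → zp i = y := by
    intro i hi; simp only [zp_def, if_neg (by omega : ¬ i ≤ aN)]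
  have hzp_detx : ∀ i, det x (zp i) = if i ≤ aN then (i : ℤ) else a * b + 1 := by
    intro i
    split_ifs with hi
    · rw [hzp_le i hi]; simp only [det]; linear_combination (i : ℤ) * hdc
    · rw [hzp_top i (by omega)]; exact hdxy
  have hzp_dety : ∀ i, det (zp i) y = if i ≤ aN then (a * b + 1) - (i : ℤ) * b else 0 := by
    intro i
    split_ifs with hi
    · rw [hzp_le i hi]; simp only [det, hy1, hy2]
      linear_combination ((a * b + 1) - (i : ℤ) * b) * hdc
    · rw [hzp_top i (by omega)]; simp only [det]; ring
  have hplus : IsConsistentPath x y 1 da zp := by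
    refine ⟨⟨?_, ?_, ?_, ?_, ?_⟩, ?_⟩
    · rw [hzp_le 0 (by omega)]; simp
    · exact hzp_top da (by omega)
    · intro i hi
      by_cases hile : i ≤ aN
      · rw [hzp_le i hile]
        exact gcd_one_of_comb (s := d) (t := -c) (by push_cast; linear_combination hdc)
      · rw [hzp_top i (by omega)]
        exact gcd_one_of_comb (s := -(x.2 + a * d)) (t := x.1 + a * c)
          (by rw [hy1, hy2]; linear_combination hdc)
    · intro i hi
      by_cases hile : i + 1 ≤ aN
      · rw [hzp_le i (by omega), hzp_le (i + 1) hile]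
        have : det (x.1 + (i : ℤ) * c, x.2 + (i : ℤ) * d)
            ((x.1 + ((i : ℕ) + 1 : ℕ) * c, x.2 + ((i : ℕ) + 1 : ℕ) * d)) = 1 := by
          simp only [det]; push_cast; linear_combination hdc
        rw [this]; norm_num
      · have hia : i = aN := by omega
        rw [hzp_le i (by omega), hzp_top (i + 1) (by omega), hia]
        have : det (x.1 + (aN : ℤ) * c, x.2 + (aN : ℤ) * d) y = 1 := by
          simp only [det, hy1, hy2, haN]; linear_combination hdc
        rw [this]; norm_num
    · intro i j hi hj hij
      constructor
      · intro h
        have e1 : det x (zp i) = det x (zp j) := by rw [h]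
        have e2 : det (zp i) y = det (zp j) y := by rw [h]
        rw [hzp_detx i, hzp_detx j] at e1
        rw [hzp_dety i, hzp_dety j] at e2
        split_ifs at e1 e2 with h1 h2 h2
        · exact hij (by exact_mod_cast e1)
        · have hib : (i : ℤ) ≤ a := by rw [← haN]; exact_mod_cast h1
          have : (i : ℤ) * b ≤ a * b := mul_le_mul_of_nonneg_right hib (by linarith)
          linarith
        · have hjb : (j : ℤ) ≤ a := by rw [← haN]; exact_mod_cast h2
          have : (j : ℤ) * b ≤ a * b := mul_le_mul_of_nonneg_right hjb (by linarith)
          linarith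
        · omega
      · intro h
        have e1 : det x (zp i) = - det x (zp j) := by
          rw [h]; simp only [det, Prod.fst_neg, Prod.snd_neg]; ring
        rw [hzp_detx i, hzp_detx j] at e1
        split_ifs at e1 with h1 h2 h2
        · have hi0 : (i : ℤ) + (j : ℤ) = 0 := by linarith
          omega
        · have : (0 : ℤ) ≤ (i : ℤ) := by positivity
          linarith
        · have : (0 : ℤ) ≤ (j : ℤ) := by positivity
          linarith
        · linarith
    · intro i hipos hilt
      have hile : i ≤ aN := by omega
      have hDQpos : (0 : ℚ) < ((a * b + 1 : ℤ) : ℚ) := by exact_mod_cast by linarith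
      have hnum : (1 : ℤ) ≤ (a * b + 1) - (i : ℤ) * b := by
        have hib : (i : ℤ) ≤ a := by rw [← haN]; exact_mod_cast hile
        have : (i : ℤ) * b ≤ a * b := mul_le_mul_of_nonneg_right hib (by linarith)
        linarith
      refine ⟨(((a * b + 1 : ℤ) - (i : ℤ) * b : ℤ) : ℚ) / ((a * b + 1 : ℤ) : ℚ),
        ((i : ℤ) : ℚ) / ((a * b + 1 : ℤ) : ℚ), ?_, ?_, ?_⟩
      · rw [hzp_le i hile, hy1]
        field_simp
        push_cast
        ring
      · rw [hzp_le i hile, hy2]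
        field_simp
        push_cast
        ring
      · rw [one_mul]
        apply mul_pos
        · apply div_pos _ hDQpos
          exact_mod_cast by linarith
        · apply div_pos _ hDQpos
          exact_mod_cast by positivity
  -- the minus path
  set zm : ℕ → ℤ × ℤ := fun j => if j = 0 then x else
    (((j : ℤ) - 1) * (x.1 + a * c) + c, ((j : ℤ) - 1) * (x.2 + a * d) + d) with zm_def
  have hzm0 : zm 0 = x := by simp only [zm_def, if_pos rfl]
  have hzm_pos : ∀ j, j ≠ 0 →
      zm j = (((j : ℤ) - 1) * (x.1 + a * c) + c, ((j : ℤ) - 1) * (x.2 + a * d) + d) := by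
    intro j hj; simp only [zm_def, if_neg hj]
  have hzm_detx : ∀ j, det x (zm j) = if j = 0 then 0 else ((j : ℤ) - 1) * a + 1 := by
    intro j
    split_ifs with hj
    · subst hj; rw [hzm0]; simp only [det]; ring
    · rw [hzm_pos j hj]; simp only [det]
      linear_combination (((j : ℤ) - 1) * a + 1) * hdc
  have hzm_dety : ∀ j, det (zm j) y = if j = 0 then a * b + 1 else (j : ℤ) - 1 - b := by
    intro j
    split_ifs with hj
    · subst hj; rw [hzm0]; exact hdxy
    · rw [hzm_pos j hj]; simp only [det, hy1, hy2]
      linear_combination ((j : ℤ) - 1 - b) * hdc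
  have hminus : IsConsistentPath x y (-1) db zm := by
    refine ⟨⟨hzm0, ?_, ?_, ?_, ?_⟩, ?_⟩
    · rw [hzm_pos db (by omega), y_def, Prod.mk.injEq]
      constructor <;> (rw [b_def]; push_cast; ring)
    · intro j hj
      by_cases hj0 : j = 0
      · subst hj0; rw [hzm0]; exact hx
      · rw [hzm_pos j hj0]
        exact gcd_one_of_comb (s := -(x.2 + a * d)) (t := x.1 + a * c)
          (by push_cast; linear_combination hdc)
    · intro j hj
      by_cases hj0 : j = 0
      · subst hj0
        rw [hzm0, hzm_pos 1 (by omega)]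
        have : det x (((1 : ℤ) - 1) * (x.1 + a * c) + c, ((1 : ℤ) - 1) * (x.2 + a * d) + d)
            = 1 := by simp only [det]; linear_combination hdc
        rw [show ((1 : ℕ) : ℤ) = (1 : ℤ) from rfl, this]; norm_num
      · rw [hzm_pos j hj0, hzm_pos (j + 1) (by omega)]
        have : det (((j : ℤ) - 1) * (x.1 + a * c) + c, ((j : ℤ) - 1) * (x.2 + a * d) + d)
            (((((j : ℕ) + 1 : ℕ) : ℤ) - 1) * (x.1 + a * c) + c,
              ((((j : ℕ) + 1 : ℕ) : ℤ) - 1) * (x.2 + a * d) + d) = -1 := by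
          simp only [det]; push_cast; linear_combination (-1 : ℤ) * hdc
        rw [this]; norm_num
    · intro i j hi hj hij
      constructor
      · intro h
        have e1 : det x (zm i) = det x (zm j) := by rw [h]
        rw [hzm_detx i, hzm_detx j] at e1
        split_ifs at e1 with h1 h2 h2
        · exact hij (by omega)
        · have : 0 ≤ ((j : ℤ) - 1) * a :=
            mul_nonneg (by omega : (0:ℤ) ≤ (j : ℤ) - 1) (by linarith)
          linarith
        · have : 0 ≤ ((i : ℤ) - 1) * a :=
            mul_nonneg (by omega : (0:ℤ) ≤ (i : ℤ) - 1) (by linarith)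
          linarith
        · have e1' : ((i : ℤ) - 1) * a = ((j : ℤ) - 1) * a := by linarith
          have := mul_right_cancel₀ (by linarith : a ≠ 0) e1'
          exact hij (by omega)
      · intro h
        have e1 : det x (zm i) = - det x (zm j) := by
          rw [h]; simp only [det, Prod.fst_neg, Prod.snd_neg]; ring
        rw [hzm_detx i, hzm_detx j] at e1
        split_ifs at e1 with h1 h2 h2
        · exact hij (by omega)
        · have : 0 ≤ ((j : ℤ) - 1) * a :=
            mul_nonneg (by omega : (0:ℤ) ≤ (j : ℤ) - 1) (by linarith)
          linarith
        · have : 0 ≤ ((i : ℤ) - 1) * a :=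
            mul_nonneg (by omega : (0:ℤ) ≤ (i : ℤ) - 1) (by linarith)
          linarith
        · have hni : 0 ≤ ((i : ℤ) - 1) * a :=
            mul_nonneg (by omega : (0:ℤ) ≤ (i : ℤ) - 1) (by linarith)
          have hnj : 0 ≤ ((j : ℤ) - 1) * a :=
            mul_nonneg (by omega : (0:ℤ) ≤ (j : ℤ) - 1) (by linarith)
          linarith
    · intro j hjpos hjlt
      have hDQpos : (0 : ℚ) < ((a * b + 1 : ℤ) : ℚ) := by exact_mod_cast by linarith
      have hjb : (j : ℤ) ≤ b := by rw [b_def]; omega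
      have hbeta : (1 : ℤ) ≤ ((j : ℤ) - 1) * a + 1 := by
        have : 0 ≤ ((j : ℤ) - 1) * a :=
          mul_nonneg (by omega : (0:ℤ) ≤ (j : ℤ) - 1) (by linarith)
        linarith
      refine ⟨(((j : ℤ) - 1 - b : ℤ) : ℚ) / ((a * b + 1 : ℤ) : ℚ),
        ((((j : ℤ) - 1) * a + 1 : ℤ) : ℚ) / ((a * b + 1 : ℤ) : ℚ), ?_, ?_, ?_⟩
      · rw [hzm_pos j (by omega), hy1]
        field_simp
        push_cast
        ring
      · rw [hzm_pos j (by omega), hy2]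
        field_simp
        push_cast
        ring
      · have hαneg : (((j : ℤ) - 1 - b : ℤ) : ℚ) / ((a * b + 1 : ℤ) : ℚ) < 0 := by
          apply div_neg_of_neg_of_pos _ hDQpos
          have hnum : ((j : ℤ) - 1 - b) < 0 := by linarith
          exact_mod_cast hnum
        have hβpos : (0 : ℚ) < ((((j : ℤ) - 1) * a + 1 : ℤ) : ℚ) / ((a * b + 1 : ℤ) : ℚ) := by
          apply div_pos _ hDQpos
          have hnum2 : (0 : ℤ) < ((j : ℤ) - 1) * a + 1 := by linarith
          exact_mod_cast hnum2
        nlinarith [mul_pos (neg_pos.mpr hαneg) hβpos]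
  -- lower bound for the plus distance
  have plus_lb : ∀ m z, IsConsistentPath x y 1 m z → da ≤ m := by
    rintro m z ⟨⟨hz0, hzm, -, hzdet, -⟩, hzcone⟩
    set w : ℕ → ℤ × ℤ :=
      fun i => (d * (z i).1 - c * (z i).2, -x.2 * (z i).1 + x.1 * (z i).2) with w_def
    have hdcQ : ((x.1 : ℚ)) * d - (x.2 : ℚ) * c = 1 := by exact_mod_cast hdc
    have hcore := fan_core m w b (a * b + 1) hb (by linarith)
      (by simp only [w_def, hz0, Prod.mk.injEq]
          constructor
          · linear_combination hdc
          · ring)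
      (Or.inl (by simp only [w_def, hzm, hy1, hy2, Prod.mk.injEq]
                  constructor
                  · linear_combination b * hdc
                  · linear_combination (a * b + 1) * hdc))
      (by intro i hi
          have e : det (w i) (w (i + 1)) = det (z i) (z (i + 1)) := by
            simp only [w_def, det]
            linear_combination ((z i).1 * (z (i + 1)).2 - (z i).2 * (z (i + 1)).1) * hdc
          rw [e]; exact hzdet i hi)
      (by intro i hip hil
          obtain ⟨α, β, hq1, hq2, hqpos⟩ := hzcone i hip hil
          rw [one_mul] at hqpos
          rw [hy1] at hq1
          rw [hy2] at hq2
          push_cast at hq1 hq2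
          have k1 : ((w i).1 : ℚ) = α + β * b := by
            simp only [w_def]; push_cast
            linear_combination (d : ℚ) * hq1 - (c : ℚ) * hq2 + (α + β * (b : ℚ)) * hdcQ
          have k2 : ((w i).2 : ℚ) = β * ((a : ℚ) * b + 1) := by
            simp only [w_def]; push_cast
            linear_combination (-(x.2 : ℚ)) * hq1 + (x.1 : ℚ) * hq2
              + β * ((a : ℚ) * b + 1) * hdcQ
          have pos : (0 : ℚ) <
              ((w i).2 : ℚ) * (((w i).1 : ℚ) * ((a : ℚ) * b + 1) - ((w i).2 : ℚ) * b) := by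
            rw [k1, k2]
            have hid : (β * ((a : ℚ) * b + 1)) *
                ((α + β * b) * ((a : ℚ) * b + 1) - (β * ((a : ℚ) * b + 1)) * b)
                = (α * β) * (((a : ℚ) * b + 1) * ((a : ℚ) * b + 1)) := by ring
            rw [hid]
            have hDQpos : (0 : ℚ) < (a : ℚ) * b + 1 := by
              have : (1 : ℚ) ≤ (a : ℚ) := by exact_mod_cast ha
              have : (1 : ℚ) ≤ (b : ℚ) := by exact_mod_cast hb
              nlinarith
            exact mul_pos hqpos (mul_pos hDQpos hDQpos)
          exact_mod_cast pos)
    by_contra hcon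
    push_neg at hcon
    have hma : (m : ℤ) ≤ a := by rw [a_def]; omega
    have : (m : ℤ) * b ≤ a * b := mul_le_mul_of_nonneg_right hma (by linarith)
    linarith
  -- lower bound for the minus distance
  have minus_lb : ∀ m z, IsConsistentPath x y (-1) m z → db ≤ m := by
    rintro m z ⟨⟨hz0, hzm, -, hzdet, -⟩, hzcone⟩
    set w : ℕ → ℤ × ℤ := fun i =>
      (-a * (d * (z (m - i)).1 - c * (z (m - i)).2)
          + (-x.2 * (z (m - i)).1 + x.1 * (z (m - i)).2),
       -(a * b + 1) * (d * (z (m - i)).1 - c * (z (m - i)).2)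
          + b * (-x.2 * (z (m - i)).1 + x.1 * (z (m - i)).2)) with w_def
    have hdcQ : ((x.1 : ℚ)) * d - (x.2 : ℚ) * c = 1 := by exact_mod_cast hdc
    have hcore := fan_core m w a (a * b + 1) ha (by linarith)
      (by simp only [w_def, Nat.sub_zero, hzm, hy1, hy2, Prod.mk.injEq]
          constructor
          · linear_combination hdc
          · ring)
      (Or.inr (by simp only [w_def, Nat.sub_self, hz0, Prod.mk.injEq]
                  constructor
                  · linear_combination (-a) * hdc
                  · linear_combination (-(a * b + 1)) * hdc))
      (by intro i hi
          have e : det (w i) (w (i + 1)) = - det (z (m - i - 1)) (z (m - i)) := by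
            simp only [w_def, det, show m - (i + 1) = m - i - 1 from by omega]
            linear_combination
              ((z (m - i)).1 * (z (m - i - 1)).2 - (z (m - i)).2 * (z (m - i - 1)).1) * hdc
          rw [e, abs_neg]
          have hk := hzdet (m - i - 1) (by omega)
          rwa [show m - i - 1 + 1 = m - i from by omega] at hk)
      (by intro i hip hil
          have hjp : 0 < m - i := by omega
          have hjl : m - i < m := by omega
          obtain ⟨α, β, hq1, hq2, hqpos⟩ := hzcone (m - i) hjp hjl
          have hαβ : α * β < 0 := by nlinarith
          rw [hy1] at hq1
          rw [hy2] at hq2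
          push_cast at hq1 hq2
          have k1 : ((d : ℚ) * (z (m - i)).1 - (c : ℚ) * (z (m - i)).2) = α + β * b := by
            linear_combination (d : ℚ) * hq1 - (c : ℚ) * hq2 + (α + β * (b : ℚ)) * hdcQ
          have k2 : ((-(x.2 : ℚ)) * (z (m - i)).1 + (x.1 : ℚ) * (z (m - i)).2)
              = β * ((a : ℚ) * b + 1) := by
            linear_combination (-(x.2 : ℚ)) * hq1 + (x.1 : ℚ) * hq2
              + β * ((a : ℚ) * b + 1) * hdcQ
          have kk1 : ((w i).1 : ℚ) = β - (a : ℚ) * α := by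
            simp only [w_def]; push_cast
            linear_combination (-(a : ℚ)) * k1 + k2
          have kk2 : ((w i).2 : ℚ) = -((a : ℚ) * b + 1) * α := by
            simp only [w_def]; push_cast
            linear_combination (-((a : ℚ) * b + 1)) * k1 + (b : ℚ) * k2
          have pos : (0 : ℚ) <
              ((w i).2 : ℚ) * (((w i).1 : ℚ) * ((a : ℚ) * b + 1) - ((w i).2 : ℚ) * a) := by
            rw [kk1, kk2]
            have hid : (-((a : ℚ) * b + 1) * α) *
                ((β - (a : ℚ) * α) * ((a : ℚ) * b + 1) - (-((a : ℚ) * b + 1) * α) * a)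
                = (-(α * β)) * (((a : ℚ) * b + 1) * ((a : ℚ) * b + 1)) := by ring
            rw [hid]
            have hDQpos : (0 : ℚ) < (a : ℚ) * b + 1 := by
              have : (1 : ℚ) ≤ (a : ℚ) := by exact_mod_cast ha
              have : (1 : ℚ) ≤ (b : ℚ) := by exact_mod_cast hb
              nlinarith
            exact mul_pos (by linarith) (mul_pos hDQpos hDQpos)
          exact_mod_cast pos)
    by_contra hcon
    push_neg at hcon
    have hmb : (m : ℤ) ≤ b := by rw [b_def]; omega
    have : (m : ℤ) * a ≤ b * a := mul_le_mul_of_nonneg_right hmb (by linarith)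
    linarith
  refine ⟨y, ?_, ?_, da, db, ⟨zp, hplus⟩, plus_lb, ⟨zm, hminus⟩, minus_lb, rfl⟩
  · exact gcd_one_of_comb (s := -(x.2 + a * d)) (t := x.1 + a * c)
      (by rw [hy1, hy2]; linear_combination hdc)
  · rw [hdxy, abs_of_pos (by linarith)]; exact hD
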